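/- For each fixed x ≥ 0, lim_{α→1⁻} [1 - W(-x, -α/2, 1)] = erf(x/2), where W is the Wright function. -/

import Mathlib

open Real

/-- The Wright function `W(z, α, β) = ∑_{n≥0} z^n / (n! Γ(αn + β))`
(with the convention `1/Γ = 0` at the poles of `Γ`). -/
noncomputable def wright (z α β : ℝ) : ℝ :=
  ∑' n : ℕ, z ^ n / ((Nat.factorial n : ℝ) * Real.Gamma (α * n + β))

/-- The Mainardi function `M_ν(z) = W(-z, -ν, 1-ν)`. -/
noncomputable def mainardi (ν z : ℝ) : ℝ :=
  ∑' n : ℕ, (-z) ^ n / ((Nat.factorial n : ℝ) * Real.Gamma (-ν * n + 1 - ν))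

/-- The Gauss error function `erf y = (2/√π) ∫₀^y e^{-t²} dt`. -/
noncomputable def erf (y : ℝ) : ℝ :=
  (2 / Real.sqrt π) * ∫ t in (0:ℝ)..y, Real.exp (-t ^ 2)

open MeasureTheory Filter

private lemma continuous_gammaInv : Continuous fun s : ℝ => (Real.Gamma s)⁻¹ := by
  have h : (fun s : ℝ => (Real.Gamma s)⁻¹) = fun s : ℝ => ((Complex.Gamma (s:ℂ))⁻¹).re := by
    funext s
    rw [Complex.Gamma_ofReal, ← Complex.ofReal_inv, Complex.ofReal_re]
  rw [h]
  exact Complex.continuous_re.comp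
    (Complex.differentiable_one_div_Gamma.continuous.comp Complex.continuous_ofReal)

private lemma gammaInv_one_sub {s : ℝ} (hs : 0 < s) :
    (Real.Gamma (1 - s))⁻¹ = Real.Gamma s * Real.sin (π * s) / π := by
  rcases eq_or_ne (Real.sin (π * s)) 0 with h0 | h0
  · obtain ⟨n, hn⟩ := Real.sin_eq_zero_iff.mp h0
    have hpi := Real.pi_ne_zero
    have hn2 : π * s = π * (n : ℝ) := by rw [← hn]; ring
    have hn' : s = (n : ℝ) := mul_left_cancel₀ hpi hn2
    have hn0 : 0 < n := by exact_mod_cast hn' ▸ hs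
    obtain ⟨m, rfl⟩ : ∃ m : ℕ, n = (m : ℤ) + 1 := ⟨(n-1).toNat, by omega⟩
    have h1 : (1 : ℝ) - s = -(m : ℕ) := by rw [hn']; push_cast; ring
    rw [h1, Real.Gamma_neg_nat_eq_zero, h0]
    simp
  · have key := Real.Gamma_mul_Gamma_one_sub s
    have hΓs := Real.Gamma_pos_of_pos hs
    have key2 : Real.Gamma s * Real.Gamma (1 - s) * Real.sin (π * s) = π := by
      rw [key]; field_simp
    have hΓ1s : Real.Gamma (1 - s) ≠ 0 := by
      intro h
      rw [h, mul_zero, zero_mul] at key2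
      exact Real.pi_ne_zero key2.symm
    field_simp
    have := key2; ring_nf at this ⊢; linarith


private lemma gamma_le_gamma {s c : ℝ} (h1 : 1/4 ≤ s) (h2 : s ≤ c) :
    Real.Gamma s ≤ 4 * Real.Gamma (c + 2) := by
  have hs : 0 < s := by linarith
  have e1 : Real.Gamma (s + 1) = s * Real.Gamma s := Real.Gamma_add_one hs.ne'
  have e2 : Real.Gamma (s + 2) = (s + 1) * Real.Gamma (s + 1) := by
    have h := Real.Gamma_add_one (s := s + 1) (by positivity)
    rwa [show s + 1 + 1 = s + 2 by ring] at h
  have hmono : Real.Gamma (s + 2) ≤ Real.Gamma (c + 2) :=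
    Real.Gamma_strictMonoOn_Ici.monotoneOn (by simp only [Set.mem_Ici]; linarith)
      (by simp only [Set.mem_Ici]; linarith) (by linarith)
  have hΓ : 0 < Real.Gamma s := Real.Gamma_pos_of_pos hs
  nlinarith [hmono, hΓ, mul_pos hs hΓ]

private lemma gamma_nat_add_half (k : ℕ) :
    Real.Gamma ((k : ℝ) + 1/2) = (2*k).factorial * Real.sqrt π / (4^k * k.factorial) := by
  induction k with
  | zero =>
    rw [show ((0:ℕ):ℝ) + 1/2 = 1/2 by norm_num, Real.Gamma_one_half_eq]
    norm_num
  | succ n ih =>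
    have h : ((n : ℝ) + 1) + 1/2 = ((n : ℝ) + 1/2) + 1 := by ring
    have hne : ((n : ℝ) + 1/2) ≠ 0 := by positivity
    push_cast
    rw [h, Real.Gamma_add_one hne, ih]
    have hf1 : ((2*(n+1)).factorial : ℝ) = (2*n+2) * ((2*n+1) * (2*n).factorial) := by
      have : 2*(n+1) = (2*n+1)+1 := by ring
      rw [this, Nat.factorial_succ, Nat.factorial_succ]; push_cast; ring
    have hf2 : ((n+1).factorial : ℝ) = (n+1) * n.factorial := by
      rw [Nat.factorial_succ]; push_cast; ring
    push_cast [hf1, hf2]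
    have h4 : (0:ℝ) < 4 ^ n := by positivity
    have hnf : (0:ℝ) < (n.factorial : ℝ) := by exact_mod_cast n.factorial_pos
    field_simp
    ring

private lemma sin_pi_half_nat (k : ℕ) : Real.sin (π * ((k:ℝ) + 1/2)) = (-1)^k := by
  have h : π * ((k:ℝ) + 1/2) = π/2 + (k:ℝ) * π := by ring
  rw [h, Real.sin_add_nat_mul_pi, Real.sin_pi_div_two, mul_one]

private lemma le_pow2 (k : ℕ) : k + 1 ≤ 2^k := by
  induction k with
  | zero => norm_num
  | succ n ih => rw [pow_succ]; nlinarith [ih]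

private lemma sq_le_pow3 (k : ℕ) : (k+2)*(k+1) ≤ 2 * 3^k := by
  induction k with
  | zero => norm_num
  | succ n ih => rw [pow_succ]; nlinarith [ih]

private lemma fact_sq_le (k : ℕ) : k.factorial * k.factorial ≤ (2*k).factorial :=
  le_trans (Nat.le_of_dvd (k+k).factorial_pos (Nat.factorial_mul_factorial_dvd_factorial_add k k))
    (Nat.factorial_le (by omega))

private lemma summable_bound (x : ℝ) (hx : 0 ≤ x) :
    Summable (fun n : ℕ => 4 * Real.Gamma ((n:ℝ)/2 + 2) * x^n / (π * n.factorial)) := by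
  have hπ := Real.pi_pos
  apply Summable.even_add_odd
  · apply Summable.of_nonneg_of_le (f := fun k : ℕ => 4 * (2*x^2)^k / (π * k.factorial))
    · intro k
      have h1 : (0:ℝ) < Real.Gamma (((2*k:ℕ):ℝ)/2 + 2) := Real.Gamma_pos_of_pos (by positivity)
      positivity
    · intro k
      have hg : Real.Gamma (((2*k:ℕ):ℝ)/2 + 2) = ((k+1).factorial : ℝ) := by
        rw [show (((2*k:ℕ)):ℝ)/2 + 2 = ((k+1):ℕ) + 1 by push_cast; ring,
          Real.Gamma_nat_eq_factorial]
      have keyn : (k+1).factorial * k.factorial ≤ 2^k * (2*k).factorial := by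
        calc (k+1).factorial * k.factorial = (k+1) * (k.factorial * k.factorial) := by
              rw [Nat.factorial_succ]; ring
          _ ≤ 2^k * (2*k).factorial := Nat.mul_le_mul (le_pow2 k) (fact_sq_le k)
      have key : ((k+1).factorial : ℝ) * k.factorial ≤ 2^k * (2*k).factorial := by
        exact_mod_cast keyn
      have hkf : (0:ℝ) < (k.factorial : ℝ) := by exact_mod_cast k.factorial_pos
      have h2kf : (0:ℝ) < ((2*k).factorial : ℝ) := by exact_mod_cast (2*k).factorial_pos
      rw [hg, div_le_div_iff₀ (by positivity) (by positivity),
        (show x^(2*k) = (x^2)^k from pow_mul x 2 k), mul_pow]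
      nlinarith [mul_le_mul_of_nonneg_left key
        (by positivity : (0:ℝ) ≤ 4 * π * (x^2)^k)]
    · exact ((Real.summable_pow_div_factorial (2*x^2)).mul_left (4/π)).congr
        (fun k => by ring)
  · apply Summable.of_nonneg_of_le (f := fun k : ℕ => 8 * x * (3*x^2)^k / (π * k.factorial))
    · intro k
      have h1 : (0:ℝ) < Real.Gamma (((2*k+1:ℕ):ℝ)/2 + 2) := Real.Gamma_pos_of_pos (by positivity)
      positivity
    · intro k
      have hk0 : (0:ℝ) ≤ (k:ℝ) := Nat.cast_nonneg k
      have hle : Real.Gamma (((2*k+1:ℕ):ℝ)/2 + 2) ≤ ((k+2).factorial : ℝ) := by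
        have h1 : Real.Gamma (((2*k+1:ℕ):ℝ)/2 + 2) ≤ Real.Gamma (((k+2):ℕ) + 1) := by
          apply Real.Gamma_strictMonoOn_Ici.monotoneOn
          · simp only [Set.mem_Ici]; push_cast; linarith
          · simp only [Set.mem_Ici]; push_cast; linarith
          · push_cast; linarith
        rwa [Real.Gamma_nat_eq_factorial] at h1
      have keyn : (k+2).factorial * k.factorial ≤ 2 * 3^k * (2*k+1).factorial := by
        calc (k+2).factorial * k.factorial
            = ((k+2)*(k+1)) * (k.factorial * k.factorial) := by
              rw [Nat.factorial_succ, Nat.factorial_succ]; ring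
          _ ≤ (2 * 3^k) * (2*k+1).factorial :=
              Nat.mul_le_mul (sq_le_pow3 k)
                (le_trans (fact_sq_le k) (Nat.factorial_le (by omega)))
      have key : ((k+2).factorial : ℝ) * k.factorial ≤ 2 * 3^k * (2*k+1).factorial := by
        exact_mod_cast keyn
      have hkf : (0:ℝ) < (k.factorial : ℝ) := by exact_mod_cast k.factorial_pos
      have h2kf : (0:ℝ) < ((2*k+1).factorial : ℝ) := by exact_mod_cast (2*k+1).factorial_pos
      have hΓpos : (0:ℝ) < Real.Gamma (((2*k+1:ℕ):ℝ)/2 + 2) :=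
        Real.Gamma_pos_of_pos (by positivity)
      have hxp : x^(2*k+1) = x * (x^2)^k := by
        rw [pow_succ', ← pow_mul]
      rw [div_le_div_iff₀ (by positivity) (by positivity), hxp, mul_pow]
      have step : 4 * Real.Gamma (((2*k+1:ℕ):ℝ)/2 + 2) * (x * (x^2)^k) * (π * k.factorial)
          ≤ 4 * ((k+2).factorial : ℝ) * (x * (x^2)^k) * (π * k.factorial) := by
        have h0 : (0:ℝ) ≤ 4 * (x * (x^2)^k) * (π * k.factorial) := by positivity
        nlinarith [mul_le_mul_of_nonneg_left hle h0]
      refine step.trans ?_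
      nlinarith [mul_le_mul_of_nonneg_left key
        (by positivity : (0:ℝ) ≤ 4 * π * (x * (x^2)^k))]
    · exact ((Real.summable_pow_div_factorial (3*x^2)).mul_left (8*x/π)).congr
        (fun k => by ring)
private lemma g_bound {x : ℝ} (hx : 0 ≤ x) {α : ℝ} (hα : α ∈ Set.Ioc (1/2:ℝ) 1) (n : ℕ) :
    |(-x)^n / ((n.factorial : ℝ) * Real.Gamma (-(α/2) * n + 1))| ≤
      4 * Real.Gamma ((n:ℝ)/2 + 2) * x^n / (π * n.factorial) := by
  obtain ⟨hα1, hα2⟩ := hα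
  have hπ := Real.pi_pos
  have hnf : (0:ℝ) < (n.factorial:ℝ) := by exact_mod_cast n.factorial_pos
  rcases Nat.eq_zero_or_pos n with rfl | hn
  · have h0 : -(α/2) * ((0:ℕ):ℝ) + 1 = 1 := by push_cast; ring
    have h2 : ((0:ℕ):ℝ)/2 + 2 = (1:ℕ) + 1 := by push_cast; ring
    rw [h0, h2, Real.Gamma_one, Real.Gamma_nat_eq_factorial]
    simp only [pow_zero, Nat.factorial_zero, Nat.factorial_one, Nat.cast_one, mul_one, one_mul,
      div_one, abs_one]
    rw [le_div_iff₀ hπ]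
    norm_num
    linarith [Real.pi_le_four]
  · have hn1 : (1:ℝ) ≤ (n:ℝ) := by exact_mod_cast hn
    set s : ℝ := α/2 * n with hs_def
    have hs : 0 < s := by rw [hs_def]; nlinarith
    have h1 : -(α/2) * (n:ℝ) + 1 = 1 - s := by rw [hs_def]; ring
    have hs14 : 1/4 ≤ s := by rw [hs_def]; nlinarith
    have hsc : s ≤ (n:ℝ)/2 := by rw [hs_def]; nlinarith
    have hΓs : 0 < Real.Gamma s := Real.Gamma_pos_of_pos hs
    have hΓc : 0 < Real.Gamma ((n:ℝ)/2 + 2) := Real.Gamma_pos_of_pos (by positivity)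
    have hbound : |(Real.Gamma (1 - s))⁻¹| ≤ 4 * Real.Gamma ((n:ℝ)/2 + 2) / π := by
      rw [gammaInv_one_sub hs, abs_div, abs_mul, abs_of_pos hΓs, abs_of_pos hπ]
      have hsin : |Real.sin (π * s)| ≤ 1 := Real.abs_sin_le_one _
      have hineq : Real.Gamma s ≤ 4 * Real.Gamma ((n:ℝ)/2 + 2) := gamma_le_gamma hs14 hsc
      rw [div_le_div_iff₀ hπ hπ]
      nlinarith [mul_le_mul_of_nonneg_left hsin hΓs.le, hineq, hπ, hΓs]
    rw [h1]
    have hrw : (-x)^n / ((n.factorial : ℝ) * Real.Gamma (1-s)) =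
        ((-x)^n/(n.factorial:ℝ)) * (Real.Gamma (1-s))⁻¹ := by
      rw [← div_div, div_eq_mul_inv]
    rw [hrw, abs_mul, abs_div, abs_pow, abs_neg, abs_of_nonneg hx, Nat.abs_cast]
    have hRHS : 4 * Real.Gamma ((n:ℝ)/2+2) * x^n/(π*(n.factorial:ℝ)) =
        (x^n/(n.factorial:ℝ)) * (4*Real.Gamma ((n:ℝ)/2+2)/π) := by ring
    rw [hRHS]
    exact mul_le_mul_of_nonneg_left hbound (by positivity)
private lemma integral_exp_sq (y : ℝ) (hy : 0 ≤ y) :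
    ∫ t in (0:ℝ)..y, Real.exp (-t ^ 2) =
      ∑' k : ℕ, (-1)^k * y^(2*k+1) / (k.factorial * (2*k+1)) := by
  have hFi : ∀ k : ℕ, IntegrableOn (fun t : ℝ => (-t^2)^k / (k.factorial:ℝ)) (Set.Ioc 0 y) :=
    fun k => (Continuous.integrableOn_Ioc (by continuity))
  have hpow : ∀ (k : ℕ) (t : ℝ), (-t^2)^k = (-1)^k * t^(2*k) := by
    intro k t
    rw [show -t^2 = (-1) * t^2 by ring, mul_pow, ← pow_mul]
  have hnorm : ∀ (k : ℕ) (t : ℝ), ‖(-t^2)^k / (k.factorial:ℝ)‖ = t^(2*k) / k.factorial := by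
    intro k t
    rw [Real.norm_eq_abs, abs_div, Nat.abs_cast]
    congr 1
    rw [hpow, abs_mul, abs_pow, abs_neg, abs_one, one_pow, one_mul,
      abs_of_nonneg (by rw [pow_mul]; positivity)]
  have hval : ∀ k : ℕ, ∫ t in Set.Ioc (0:ℝ) y, ‖(-t^2)^k / (k.factorial:ℝ)‖ =
      y^(2*k+1) / ((2*k+1) * k.factorial) := by
    intro k
    simp only [hnorm]
    rw [← intervalIntegral.integral_of_le hy, intervalIntegral.integral_div, integral_pow]
    rw [zero_pow (by omega), sub_zero, div_div]
    push_cast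
    ring_nf
  have hsum : Summable (fun k : ℕ => y^(2*k+1) / (((2*k+1):ℝ) * k.factorial)) := by
    apply Summable.of_nonneg_of_le (f := fun k : ℕ => y * (y^2)^k / k.factorial)
    · intro k; positivity
    · intro k
      have h1 : y^(2*k+1) = y * (y^2)^k := by rw [pow_succ', ← pow_mul]
      rw [h1]
      have hf1 : (1:ℝ) ≤ (k.factorial:ℝ) := by exact_mod_cast k.factorial_pos
      have hk0 : (0:ℝ) ≤ (k:ℝ) := Nat.cast_nonneg k
      apply div_le_div_of_nonneg_left ?h ?h2 ?h3
      · positivity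
      · positivity
      · nlinarith [hf1, hk0]
    · exact ((Real.summable_pow_div_factorial (y^2)).mul_left y).congr (fun k => by ring)
  have hexp : ∀ t : ℝ, Real.exp (-t^2) = ∑' k : ℕ, (-t^2)^k / (k.factorial:ℝ) := by
    intro t
    rw [Real.exp_eq_exp_ℝ, NormedSpace.exp_eq_tsum_div]
  have hsum' : Summable fun k : ℕ => ∫ t in Set.Ioc (0:ℝ) y, ‖(-t^2)^k / (k.factorial:ℝ)‖ :=
    hsum.congr (fun k => (hval k).symm)
  calc ∫ t in (0:ℝ)..y, Real.exp (-t ^ 2)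
      = ∫ t in Set.Ioc (0:ℝ) y, ∑' k : ℕ, (-t^2)^k / (k.factorial:ℝ) := by
        rw [intervalIntegral.integral_of_le hy]
        simp only [hexp]
    _ = ∑' k : ℕ, ∫ t in Set.Ioc (0:ℝ) y, (-t^2)^k / (k.factorial:ℝ) :=
        (integral_tsum_of_summable_integral_norm hFi hsum').symm
    _ = ∑' k : ℕ, (-1)^k * y^(2*k+1) / (k.factorial * (2*k+1)) := by
        apply tsum_congr
        intro k
        simp only [hpow]
        rw [← intervalIntegral.integral_of_le hy]
        simp only [show ∀ t : ℝ, (-1:ℝ)^k * t^(2*k)/(k.factorial:ℝ) =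
          ((-1:ℝ)^k/(k.factorial:ℝ)) * t^(2*k) from fun t => by ring]
        rw [intervalIntegral.integral_const_mul, integral_pow, zero_pow (by omega), sub_zero]
        have hkf : (k.factorial:ℝ) ≠ 0 := by positivity
        push_cast
        field_simp

private lemma erf_eq (x : ℝ) (hx : 0 ≤ x) :
    erf (x/2) = ∑' k : ℕ, (-1)^k * x^(2*k+1) / (4^k * k.factorial * (2*k+1) * Real.sqrt π) := by
  rw [erf, integral_exp_sq (x/2) (by linarith), ← tsum_mul_left]
  apply tsum_congr
  intro k
  have h1 : ((x/2))^(2*k+1) = x^(2*k+1) / (2*4^k) := by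
    rw [div_pow, show (2:ℝ)^(2*k+1) = 2*4^k by rw [pow_succ, pow_mul]; norm_num; ring]
  have hsq : Real.sqrt π ≠ 0 := (Real.sqrt_pos.mpr Real.pi_pos).ne'
  have hpp : Real.sqrt π * Real.sqrt π = π := Real.mul_self_sqrt Real.pi_pos.le
  have hkf : (k.factorial:ℝ) ≠ 0 := by positivity
  have h2k : (0:ℝ) < 2*(k:ℝ)+1 := by positivity
  have h4k : ((4:ℝ))^k ≠ 0 := by positivity
  rw [h1]
  field_simp

theorem one_sub_wright_tendsto_erf (x : ℝ) (hx : 0 ≤ x) :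
    Filter.Tendsto (fun α : ℝ => 1 - wright (-x) (-(α / 2)) 1)
      (nhdsWithin 1 (Set.Iio 1)) (nhds (erf (x / 2))) := by
  have hπ := Real.pi_pos
  -- Step A: convergence of the Wright function value as α → 1⁻
  have hA : Filter.Tendsto (fun α : ℝ => wright (-x) (-(α / 2)) 1)
      (nhdsWithin 1 (Set.Iio 1)) (nhds (wright (-x) (-((1:ℝ) / 2)) 1)) := by
    simp only [wright]
    apply tendsto_tsum_of_dominated_convergence (summable_bound x hx)
    · intro n
      have hc : Continuous fun α : ℝ =>
          (-x)^n / ((n.factorial:ℝ) * Real.Gamma (-(α/2) * n + 1)) := by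
        have hcont : Continuous fun α : ℝ => (Real.Gamma (-(α/2) * n + 1))⁻¹ :=
          continuous_gammaInv.comp (by continuity)
        have : (fun α : ℝ => (-x)^n / ((n.factorial:ℝ) * Real.Gamma (-(α/2) * n + 1))) =
            fun α : ℝ => ((-x)^n / (n.factorial:ℝ)) * (Real.Gamma (-(α/2) * n + 1))⁻¹ := by
          funext α
          rw [← div_div, div_eq_mul_inv]
        rw [this]
        exact continuous_const.mul hcont
      exact (hc.tendsto 1).mono_left nhdsWithin_le_nhds
    · filter_upwards [Ioo_mem_nhdsLT_of_mem
        (show (1:ℝ) ∈ Set.Ioc (1/2 : ℝ) 1 by constructor <;> norm_num)] with α hα n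
      rw [Real.norm_eq_abs]
      exact g_bound hx ⟨hα.1, hα.2.le⟩ n
  -- Step B: value of the limit series
  have hB : wright (-x) (-((1:ℝ) / 2)) 1 = 1 - erf (x/2) := by
    set a : ℕ → ℝ := fun n => (-x)^n / ((n.factorial:ℝ) * Real.Gamma (-((1:ℝ)/2) * n + 1))
      with ha_def
    have hsummable : Summable a := by
      apply Summable.of_norm_bounded (summable_bound x hx)
      intro n
      rw [Real.norm_eq_abs]
      exact g_bound hx ⟨by norm_num, le_refl 1⟩ n
    have he : Summable fun k : ℕ => a (2*k) :=
      hsummable.comp_injective fun m n h => by omega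
    have ho : Summable fun k : ℕ => a (2*k+1) :=
      hsummable.comp_injective fun m n h => by omega
    have hsplit : (∑' k : ℕ, a (2*k)) + (∑' k : ℕ, a (2*k+1)) = ∑' n, a n :=
      tsum_even_add_odd he ho
    have heven : (∑' k : ℕ, a (2*k)) = 1 := by
      rw [tsum_eq_single 0]
      · simp only [ha_def, mul_zero, Nat.cast_zero, Nat.factorial_zero, pow_zero]
        norm_num [Real.Gamma_one]
      · intro k hk
        obtain ⟨m, rfl⟩ : ∃ m : ℕ, k = m + 1 := ⟨k - 1, by omega⟩
        have h1 : -((1:ℝ)/2) * ((2*(m+1) : ℕ) : ℝ) + 1 = -(m:ℕ) := by push_cast; ring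
        simp only [ha_def, h1, Real.Gamma_neg_nat_eq_zero, mul_zero, div_zero]
    have hodd : (∑' k : ℕ, a (2*k+1)) = -erf (x/2) := by
      have hterm : ∀ k : ℕ, a (2*k+1) =
          -((-1)^k * x^(2*k+1) / (4^k * k.factorial * (2*k+1) * Real.sqrt π)) := by
        intro k
        have h1 : -((1:ℝ)/2) * ((2*k+1 : ℕ) : ℝ) + 1 = 1 - ((k:ℝ) + 1/2) := by push_cast; ring
        have hs : (0:ℝ) < (k:ℝ) + 1/2 := by positivity
        have h2 : (Real.Gamma (1 - ((k:ℝ) + 1/2)))⁻¹ =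
            (2*k).factorial * Real.sqrt π / (4^k * k.factorial) * (-1)^k / π := by
          rw [gammaInv_one_sub hs, gamma_nat_add_half, sin_pi_half_nat]
        have hneg : (-x)^(2*k+1) = -(x^(2*k+1)) :=
          Odd.neg_pow ⟨k, by ring⟩ x
        have hfac : ((2*k+1).factorial : ℝ) = ((2*k+1):ℕ) * ((2*k).factorial:ℝ) := by
          rw [show (2*k+1) = (2*k) + 1 from rfl, Nat.factorial_succ]
          push_cast
          ring
        have hsq : Real.sqrt π ≠ 0 := (Real.sqrt_pos.mpr Real.pi_pos).ne'
        have hpp : Real.sqrt π * Real.sqrt π = π := Real.mul_self_sqrt Real.pi_pos.le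
        have hkf : (k.factorial:ℝ) ≠ 0 := by positivity
        have h2kf : ((2*k).factorial:ℝ) ≠ 0 := by positivity
        have h4k : ((4:ℝ))^k ≠ 0 := by positivity
        have h2k1 : (0:ℝ) < 2*(k:ℝ)+1 := by positivity
        simp only [ha_def, h1]
        rw [← div_div, div_eq_mul_inv, h2, hneg, hfac]
        push_cast
        field_simp
        ring_nf
        rw [Real.sq_sqrt Real.pi_pos.le]
      rw [tsum_congr hterm, tsum_neg, erf_eq x hx]
    rw [wright, ← hsplit, heven, hodd]
    push_cast
    ring
  rw [hB] at hA
  have := (tendsto_const_nhds (x := (1:ℝ))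
    (f := nhdsWithin (1:ℝ) (Set.Iio 1))).sub hA
  simpa using this
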